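/- With p_x(t) = |e^{At}| p_x(0) + ∫₀ᵗ |e^{A(t−τ)} B| p_w(τ) dτ and p̌_x(t) = e^{ψ(A)t} p_x(0) + ∫₀ᵗ e^{ψ(A)(t−τ)} |B| p_w(τ) dτ, one has p_x(t) ≤ p̌_x(t) componentwise for all t ≥ 0; moreover p̌_x satisfies the linear ODE p̌̇_x(t) = ψ(A) p̌_x(t) + |B| p_w(t), p̌_x(0) = p_x(0). -/

import Mathlib

noncomputable def entAbs {m n : ℕ} (A : Matrix (Fin m) (Fin n) ℝ) : Matrix (Fin m) (Fin n) ℝ :=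
  Matrix.of fun i j => |A i j|

noncomputable def metzlerPart {n : ℕ} (A : Matrix (Fin n) (Fin n) ℝ) : Matrix (Fin n) (Fin n) ℝ :=
  Matrix.of fun i j => if i = j then A i j else |A i j|

open NormedSpace MeasureTheory

namespace MetzlerAux

section NormedAux

attribute [local instance] Matrix.linftyOpNormedRing Matrix.linftyOpNormedAlgebra
variable {n nw : ℕ}


noncomputable def entryCLM (i j : Fin n) : Matrix (Fin n) (Fin n) ℝ →L[ℝ] ℝ :=
  (ContinuousLinearMap.proj (R := ℝ) (φ := fun _ : Fin n => ℝ) j).comp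
    (ContinuousLinearMap.proj (R := ℝ) (φ := fun _ : Fin n => Fin n → ℝ) i)

lemma exp_apply_eq_tsum (M : Matrix (Fin n) (Fin n) ℝ) (i j : Fin n) :
    exp M i j = ∑' k : ℕ, (((k.factorial : ℝ)⁻¹) • M ^ k) i j := by
  have := (entryCLM i j).map_tsum (expSeries_summable' (𝕂 := ℝ) M)
  rw [exp_eq_tsum ℝ]
  exact this

lemma summable_exp_entry (M : Matrix (Fin n) (Fin n) ℝ) (i j : Fin n) :
    Summable (fun k : ℕ => (((k.factorial : ℝ)⁻¹) • M ^ k) i j) := by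
  have := (expSeries_summable' (𝕂 := ℝ) M).map (entryCLM i j).toLinearMap.toAddMonoidHom
    (entryCLM i j).continuous
  exact this

lemma pow_entry_abs_le {M N : Matrix (Fin n) (Fin n) ℝ} (h : ∀ i j, |M i j| ≤ N i j) :
    ∀ (k : ℕ) (i j : Fin n), |(M ^ k) i j| ≤ (N ^ k) i j := by
  intro k
  induction k with
  | zero => intro i j; simp [Matrix.one_apply]; split <;> simp
  | succ k ih =>
    intro i j
    rw [pow_succ, pow_succ, Matrix.mul_apply, Matrix.mul_apply]
    calc |∑ l, (M ^ k) i l * M l j| ≤ ∑ l, |(M ^ k) i l * M l j| := Finset.abs_sum_le_sum_abs _ _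
      _ ≤ ∑ l, (N ^ k) i l * N l j := by
          refine Finset.sum_le_sum fun l _ => ?_
          rw [abs_mul]
          exact mul_le_mul (ih i l) (h l j) (abs_nonneg _)
            (le_trans (abs_nonneg _) (ih i l))

lemma exp_entry_abs_le {M N : Matrix (Fin n) (Fin n) ℝ} (h : ∀ i j, |M i j| ≤ N i j)
    (i j : Fin n) : |exp M i j| ≤ exp N i j := by
  rw [exp_apply_eq_tsum, exp_apply_eq_tsum]
  have hterm : ∀ k : ℕ, |(((k.factorial : ℝ)⁻¹) • M ^ k) i j|
      ≤ (((k.factorial : ℝ)⁻¹) • N ^ k) i j := by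
    intro k
    simp only [Matrix.smul_apply, smul_eq_mul, abs_mul, abs_inv, Nat.abs_cast]
    exact mul_le_mul_of_nonneg_left (pow_entry_abs_le h k i j) (by positivity)
  calc |∑' k : ℕ, (((k.factorial : ℝ)⁻¹) • M ^ k) i j|
      ≤ ∑' k : ℕ, |(((k.factorial : ℝ)⁻¹) • M ^ k) i j| := by
        simpa only [Real.norm_eq_abs] using
          norm_tsum_le_tsum_norm (f := fun k : ℕ => (((k.factorial : ℝ)⁻¹) • M ^ k) i j)
            (by simpa only [Real.norm_eq_abs] using (summable_exp_entry M i j).abs)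
    _ ≤ ∑' k : ℕ, (((k.factorial : ℝ)⁻¹) • N ^ k) i j := by
        exact Summable.tsum_le_tsum hterm ((summable_exp_entry M i j).abs) (summable_exp_entry N i j)

lemma exp_smul_one (r : ℝ) :
    exp (r • (1 : Matrix (Fin n) (Fin n) ℝ)) = Real.exp r • (1 : Matrix (Fin n) (Fin n) ℝ) := by
  rw [← Algebra.algebraMap_eq_smul_one, ← Algebra.algebraMap_eq_smul_one,
    Real.exp_eq_exp_ℝ]
  exact (algebraMap_exp_comm (𝕂 := ℝ) r).symm

lemma abs_exp_le_exp_metzler (A : Matrix (Fin n) (Fin n) ℝ) {t : ℝ} (ht : 0 ≤ t) (i j : Fin n) :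
    |exp (t • A) i j| ≤ exp (t • metzlerPart A) i j := by
  set c : ℝ := ∑ k, |A k k| with hc
  have hcnn : ∀ k, 0 ≤ A k k + c := by
    intro k
    have h1 : |A k k| ≤ c := Finset.single_le_sum (f := fun k => |A k k|)
      (fun _ _ => abs_nonneg _) (Finset.mem_univ k)
    nlinarith [neg_abs_le (A k k)]
  have hcomm1 : Commute (t • A) ((t * c) • (1 : Matrix (Fin n) (Fin n) ℝ)) := by
    apply Commute.smul_right; apply Commute.smul_left; exact Commute.one_right _
  have hcomm2 : Commute (t • metzlerPart A) ((t * c) • (1 : Matrix (Fin n) (Fin n) ℝ)) := by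
    apply Commute.smul_right; apply Commute.smul_left; exact Commute.one_right _
  have hent : ∀ i j, |(t • A + (t * c) • (1 : Matrix (Fin n) (Fin n) ℝ)) i j|
      ≤ (t • metzlerPart A + (t * c) • (1 : Matrix (Fin n) (Fin n) ℝ)) i j := by
    intro i j
    simp only [Matrix.add_apply, Matrix.smul_apply, Matrix.one_apply, smul_eq_mul,
      metzlerPart, Matrix.of_apply]
    by_cases hij : i = j
    · subst hij
      simp only [if_pos rfl, eq_self_iff_true, if_true, mul_one]
      rw [abs_of_nonneg (by nlinarith [mul_nonneg ht (hcnn i)])]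
    · simp only [if_neg hij, mul_zero, add_zero]
      rw [abs_mul, abs_of_nonneg ht]
  have hkey := exp_entry_abs_le hent i j
  rw [Matrix.exp_add_of_commute _ _ hcomm1, Matrix.exp_add_of_commute _ _ hcomm2, exp_smul_one] at hkey
  have hrw : ∀ (X : Matrix (Fin n) (Fin n) ℝ),
      (X * (Real.exp (t * c) • (1 : Matrix (Fin n) (Fin n) ℝ))) i j
        = Real.exp (t * c) * X i j := by
    intro X
    rw [Matrix.mul_smul, Matrix.mul_one, Matrix.smul_apply, smul_eq_mul]
  rw [hrw, hrw, abs_mul, abs_of_pos (Real.exp_pos _)] at hkey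
  exact le_of_mul_le_mul_left hkey (Real.exp_pos _)

lemma metzlerPart_idem (A : Matrix (Fin n) (Fin n) ℝ) :
    metzlerPart (metzlerPart A) = metzlerPart A := by
  ext i j
  simp only [metzlerPart, Matrix.of_apply]
  by_cases hij : i = j <;> simp [hij, abs_abs]

lemma exp_metzler_nonneg (A : Matrix (Fin n) (Fin n) ℝ) {t : ℝ} (ht : 0 ≤ t) (i j : Fin n) :
    0 ≤ exp (t • metzlerPart A) i j := by
  have := abs_exp_le_exp_metzler (metzlerPart A) ht i j
  rw [metzlerPart_idem] at this
  exact le_trans (abs_nonneg _) this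

variable {m k : ℕ}
/-- `X ↦ X.mulVec v` as a continuous linear map. -/
noncomputable def mulVecConstCLM (v : Fin k → ℝ) :
    Matrix (Fin m) (Fin k) ℝ →L[ℝ] (Fin m → ℝ) :=
  LinearMap.toContinuousLinearMap
    { toFun := fun X => X.mulVec v
      map_add' := fun X Y => Matrix.add_mulVec X Y v
      map_smul' := fun c X => (Matrix.smul_mulVec c X v) }

/-- `v ↦ M.mulVec v` as a continuous linear map. -/
noncomputable def mulVecCLM (M : Matrix (Fin m) (Fin k) ℝ) :
    (Fin k → ℝ) →L[ℝ] (Fin m → ℝ) :=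
  LinearMap.toContinuousLinearMap M.mulVecLin

@[simp] lemma mulVecCLM_apply (M : Matrix (Fin m) (Fin k) ℝ) (v : Fin k → ℝ) :
    mulVecCLM M v = M.mulVec v := rfl

@[simp] lemma mulVecConstCLM_apply (X : Matrix (Fin m) (Fin k) ℝ) (v : Fin k → ℝ) :
    mulVecConstCLM v X = X.mulVec v := rfl

/-- interval integrability of a pi-valued measurable function bounded on `uIcc`. -/
lemma intervalIntegrable_pi_of_bound {f : ℝ → Fin m → ℝ} {a b : ℝ}
    (hm : ∀ i, Measurable fun τ => f τ i)
    (hb : ∀ i, ∃ C, ∀ x ∈ Set.uIcc a b, |f x i| ≤ C) :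
    IntervalIntegrable f volume a b := by
  choose C hC using hb
  set D : ℝ := ∑ i, max (C i) 0 with hD
  have hDnn : 0 ≤ D := Finset.sum_nonneg fun i _ => le_max_right _ _
  rw [intervalIntegrable_iff]
  refine Integrable.mono' (g := fun _ => D)
    (integrableOn_const measure_Ioc_lt_top.ne)
    ((measurable_pi_iff.mpr hm).aestronglyMeasurable.restrict) ?_
  filter_upwards [ae_restrict_mem measurableSet_uIoc] with x hx
  have hx' : x ∈ Set.uIcc a b := Set.uIoc_subset_uIcc hx
  rw [pi_norm_le_iff_of_nonneg hDnn]
  intro i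
  rw [Real.norm_eq_abs]
  calc |f x i| ≤ C i := hC i x hx'
    _ ≤ max (C i) 0 := le_max_left _ _
    _ ≤ D := Finset.single_le_sum (f := fun i => max (C i) 0)
        (fun i _ => le_max_right _ _) (Finset.mem_univ i)

lemma intervalIntegrable_of_bound {f : ℝ → ℝ} {a b : ℝ}
    (hm : Measurable f) {C : ℝ} (hb : ∀ x ∈ Set.uIcc a b, |f x| ≤ C) :
    IntervalIntegrable f volume a b := by
  rw [intervalIntegrable_iff]
  refine Integrable.mono' (g := fun _ => C)
    (integrableOn_const measure_Ioc_lt_top.ne)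
    (hm.aestronglyMeasurable.restrict) ?_
  filter_upwards [ae_restrict_mem measurableSet_uIoc] with x hx
  rw [Real.norm_eq_abs]
  exact hb x (Set.uIoc_subset_uIcc hx)

/-- the master integrability lemma: continuous matrix kernel times bounded measurable vector. -/
lemma intervalIntegrable_mulVec {G : ℝ → Matrix (Fin m) (Fin k) ℝ} (hG : Continuous G)
    {p : ℝ → Fin k → ℝ} (hp : ∀ j, Measurable fun τ => p τ j)
    (hpb : ∃ C, ∀ τ j, |p τ j| ≤ C) {a b : ℝ} :
    IntervalIntegrable (fun τ => (G τ).mulVec (p τ)) volume a b := by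
  obtain ⟨Cp, hCp⟩ := hpb
  refine intervalIntegrable_pi_of_bound (fun i => ?_) (fun i => ?_)
  · simp only [Matrix.mulVec, dotProduct]
    exact Finset.measurable_sum _ fun j _ =>
      ((hG.matrix_elem i j).measurable).mul (hp j)
  · have hcont : Continuous fun τ => ∑ j, |G τ i j| :=
      continuous_finset_sum _ fun j _ => (hG.matrix_elem i j).abs
    obtain ⟨Cg, hCg⟩ := isCompact_uIcc.exists_bound_of_continuousOn hcont.continuousOn
    refine ⟨Cg * |Cp|, fun x hx => ?_⟩
    have h1 : |(G x).mulVec (p x) i| ≤ ∑ j, |G x i j| * |p x j| := by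
      simp only [Matrix.mulVec, dotProduct]
      refine (Finset.abs_sum_le_sum_abs _ _).trans (le_of_eq ?_)
      exact Finset.sum_congr rfl fun j _ => abs_mul _ _
    have h2 : ∑ j, |G x i j| * |p x j| ≤ (∑ j, |G x i j|) * |Cp| := by
      rw [Finset.sum_mul]
      exact Finset.sum_le_sum fun j _ =>
        mul_le_mul_of_nonneg_left ((hCp x j).trans (le_abs_self Cp)) (abs_nonneg _)
    have h3 : (∑ j, |G x i j|) * |Cp| ≤ Cg * |Cp| := by
      refine mul_le_mul_of_nonneg_right ?_ (abs_nonneg _)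
      have := hCg x hx
      rwa [Real.norm_eq_abs, abs_of_nonneg (Finset.sum_nonneg fun j _ => abs_nonneg _)] at this
    exact h1.trans (h2.trans h3)

lemma cont_exp_path (M : Matrix (Fin n) (Fin n) ℝ) :
    Continuous fun s : ℝ => exp (s • M) :=
  exp_continuous.comp (continuous_id.smul continuous_const)


lemma ftc_exp' (M : Matrix (Fin n) (Fin n) ℝ) (v : Fin n → ℝ) (a b : ℝ) :
    (∫ s in a..b, (M * exp (s • M)).mulVec v) =
      (exp (b • M)).mulVec v - (exp (a • M)).mulVec v := by
  have hderiv : ∀ s ∈ Set.uIcc a b,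
      HasDerivAt (fun r : ℝ => (exp (r • M)).mulVec v)
        ((M * exp (s • M)).mulVec v) s := by
    intro s _
    have h1 := hasDerivAt_exp_smul_const' (𝕂 := ℝ) M s
    have := (mulVecConstCLM v).hasFDerivAt.comp_hasDerivAt s h1
    exact this
  refine intervalIntegral.integral_eq_sub_of_hasDerivAt hderiv ?_
  exact ((continuous_const.matrix_mul (cont_exp_path M)).matrix_mulVec
    continuous_const).intervalIntegrable _ _

lemma integral_entry {f : ℝ → Fin m → ℝ} {a b : ℝ}
    (h : IntervalIntegrable f volume a b) (i : Fin m) :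
    (∫ τ in a..b, f τ) i = ∫ τ in a..b, f τ i :=
  ((ContinuousLinearMap.proj (R := ℝ) (φ := fun _ : Fin m => ℝ) i).intervalIntegral_comp_comm
    h).symm

lemma exp_smul_add (M : Matrix (Fin n) (Fin n) ℝ) (s τ : ℝ) :
    exp ((s + τ) • M) = exp (s • M) * exp (τ • M) := by
  rw [add_smul]
  exact exp_add_of_commute (((Commute.refl M).smul_left s).smul_right τ)

lemma swap_triangle {t : ℝ} (ht : 0 ≤ t) (H : ℝ → Matrix (Fin n) (Fin n) ℝ)
    (hH : Continuous H) (q : ℝ → Fin n → ℝ) (hq : ∀ j, Measurable fun τ => q τ j)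
    {Cq : ℝ} (hCq : ∀ τ j, |q τ j| ≤ Cq) :
    (∫ s in (0:ℝ)..t, ∫ τ in (0:ℝ)..s, (H (s - τ)).mulVec (q τ)) =
      ∫ τ in (0:ℝ)..t, ∫ s in τ..t, (H (s - τ)).mulVec (q τ) := by
  set μ := volume.restrict (Set.Ioc (0:ℝ) t) with hμ
  have hfin : IsFiniteMeasure μ :=
    ⟨by rw [hμ, Measure.restrict_apply_univ]; exact measure_Ioc_lt_top⟩
  set F : ℝ → ℝ → (Fin n → ℝ) := fun s τ => (H (s - τ)).mulVec (q τ) with hF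
  set Φ : ℝ → ℝ → (Fin n → ℝ) := fun s τ => Set.indicator (Set.Ioc 0 s) (F s) τ with hΦ
  -- measurability of uncurried Φ
  have hS : MeasurableSet {p : ℝ × ℝ | p.2 ∈ Set.Ioc 0 p.1} := by
    apply MeasurableSet.inter
    · exact measurableSet_lt measurable_const measurable_snd
    · exact measurableSet_le measurable_snd measurable_fst
  have hGmeas : Measurable (fun p : ℝ × ℝ => F p.1 p.2) := by
    rw [measurable_pi_iff]
    intro i
    simp only [hF, Matrix.mulVec, dotProduct]
    refine Finset.measurable_sum _ fun k _ => Measurable.mul ?_ ((hq k).comp measurable_snd)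
    exact (hH.matrix_elem i k).measurable.comp (measurable_fst.sub measurable_snd)
  have hΦmeas : Measurable (fun p : ℝ × ℝ => Φ p.1 p.2) := by
    have : (fun p : ℝ × ℝ => Φ p.1 p.2)
        = Set.indicator {p : ℝ × ℝ | p.2 ∈ Set.Ioc 0 p.1} (fun p => F p.1 p.2) := by
      ext p i
      by_cases h : p.2 ∈ Set.Ioc 0 p.1 <;>
      · rw [show Φ p.1 p.2 = (Set.Ioc 0 p.1).indicator (F p.1) p.2 from rfl]
        rw [Set.indicator_apply, Set.indicator_apply]
        simp only [Set.mem_setOf_eq, h, if_true, if_false]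
    rw [this]
    exact hGmeas.indicator hS
  -- bound for F on the relevant region
  have hHcont : Continuous fun r => ∑ i, ∑ k, |H r i k| :=
    continuous_finset_sum _ fun i _ => continuous_finset_sum _ fun k _ => (hH.matrix_elem i k).abs
  obtain ⟨CH, hCH⟩ := (isCompact_Icc (a := -t) (b := t)).exists_bound_of_continuousOn
    hHcont.continuousOn
  have hFbound : ∀ s ∈ Set.Ioc (0:ℝ) t, ∀ τ ∈ Set.Ioc (0:ℝ) t, ‖F s τ‖ ≤ max CH 0 * |Cq| := by
    intro s hs τ hτ
    have hst : s - τ ∈ Set.Icc (-t) t := by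
      constructor <;> [linarith [hs.2, hτ.1, hτ.2, hs.1]; linarith [hs.2, hτ.1]]
    have hsum : ∑ i, ∑ k, |H (s - τ) i k| ≤ CH := by
      have := hCH _ hst
      rwa [Real.norm_eq_abs,
        abs_of_nonneg (Finset.sum_nonneg fun i _ => Finset.sum_nonneg fun k _ => abs_nonneg _)]
        at this
    rw [pi_norm_le_iff_of_nonneg (by positivity)]
    intro i
    rw [Real.norm_eq_abs]
    have h1 : |F s τ i| ≤ ∑ k, |H (s - τ) i k| * |q τ k| := by
      simp only [hF, Matrix.mulVec, dotProduct]
      refine (Finset.abs_sum_le_sum_abs _ _).trans (le_of_eq ?_)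
      exact Finset.sum_congr rfl fun k _ => abs_mul _ _
    have h2 : ∑ k, |H (s - τ) i k| * |q τ k| ≤ (∑ k, |H (s - τ) i k|) * |Cq| := by
      rw [Finset.sum_mul]
      exact Finset.sum_le_sum fun k _ =>
        mul_le_mul_of_nonneg_left ((hCq τ k).trans (le_abs_self Cq)) (abs_nonneg _)
    have h3 : (∑ k, |H (s - τ) i k|) * |Cq| ≤ max CH 0 * |Cq| := by
      refine mul_le_mul_of_nonneg_right ?_ (abs_nonneg _)
      calc ∑ k, |H (s - τ) i k| ≤ ∑ i', ∑ k, |H (s - τ) i' k| :=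
            Finset.single_le_sum (f := fun i' => ∑ k, |H (s - τ) i' k|)
              (fun i' _ => Finset.sum_nonneg fun k _ => abs_nonneg _) (Finset.mem_univ i)
        _ ≤ CH := hsum
        _ ≤ max CH 0 := le_max_left _ _
    exact h1.trans (h2.trans h3)
  -- integrability of Φ on μ.prod μ
  have hΦint : Integrable (Function.uncurry Φ) (μ.prod μ) := by
    refine Integrable.mono' (g := fun _ => max CH 0 * |Cq|) (integrable_const _)
      hΦmeas.aestronglyMeasurable ?_
    have hprod : μ.prod μ = (volume.prod volume).restrict
        (Set.Ioc (0:ℝ) t ×ˢ Set.Ioc (0:ℝ) t) := Measure.prod_restrict _ _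
    rw [hprod]
    filter_upwards [ae_restrict_mem (measurableSet_Ioc.prod measurableSet_Ioc)] with p hp
    rcases hp with ⟨hp1, hp2⟩
    simp only [Function.uncurry, hΦ, Set.indicator]
    by_cases h : p.2 ∈ Set.Ioc 0 p.1
    · rw [if_pos h]; exact hFbound p.1 hp1 p.2 hp2
    · rw [if_neg h, norm_zero]; positivity
  -- rewrite LHS
  have hL : (∫ s in (0:ℝ)..t, ∫ τ in (0:ℝ)..s, F s τ) = ∫ s, (∫ τ, Φ s τ ∂μ) ∂μ := by
    rw [intervalIntegral.integral_of_le ht]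
    refine setIntegral_congr_fun measurableSet_Ioc fun s hs => ?_
    rw [intervalIntegral.integral_of_le hs.1.le, hμ, setIntegral_indicator measurableSet_Ioc,
      Set.Ioc_inter_Ioc]
    congr 1
    simp [max_self, min_eq_right hs.2]
  -- rewrite RHS
  have hR : (∫ τ in (0:ℝ)..t, ∫ s in τ..t, F s τ) = ∫ τ, (∫ s, Φ s τ ∂μ) ∂μ := by
    rw [intervalIntegral.integral_of_le ht]
    refine setIntegral_congr_fun measurableSet_Ioc fun τ hτ => ?_
    have hind : ∀ s, Φ s τ = Set.indicator (Set.Ici τ) (fun s' => F s' τ) s := by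
      intro s
      simp only [hΦ, Set.indicator, Set.mem_Ioc, Set.mem_Ici]
      by_cases h : τ ≤ s
      · simp [h, hτ.1]
      · simp [h]
    simp_rw [hind]
    rw [hμ, setIntegral_indicator measurableSet_Ici]
    have hset : Set.Ioc (0:ℝ) t ∩ Set.Ici τ = Set.Icc τ t := by
      ext s
      simp only [Set.mem_inter_iff, Set.mem_Ioc, Set.mem_Ici, Set.mem_Icc]
      constructor
      · rintro ⟨⟨_, h2⟩, h3⟩; exact ⟨h3, h2⟩
      · rintro ⟨h1, h2⟩; exact ⟨⟨lt_of_lt_of_le hτ.1 h1, h2⟩, h1⟩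
    rw [hset, integral_Icc_eq_integral_Ioc, intervalIntegral.integral_of_le hτ.2]
  rw [hL, hR, integral_integral_swap hΦint]

lemma intervalIntegrable_entry {m : ℕ} {f : ℝ → Fin m → ℝ} {a b : ℝ}
    (h : IntervalIntegrable f volume a b) (i : Fin m) :
    IntervalIntegrable (fun τ => f τ i) volume a b := by
  rw [intervalIntegrable_iff] at h ⊢
  exact (ContinuousLinearMap.proj (R := ℝ) (φ := fun _ : Fin m => ℝ) i).integrable_comp h

lemma mul_entry_bound {n nw : ℕ} (A : Matrix (Fin n) (Fin n) ℝ) (B : Matrix (Fin n) (Fin nw) ℝ)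
    {s : ℝ} (hs : 0 ≤ s) (i : Fin n) (j : Fin nw) :
    |(exp (s • A) * B) i j| ≤ (exp (s • metzlerPart A) * entAbs B) i j := by
  rw [Matrix.mul_apply, Matrix.mul_apply]
  calc |∑ l, exp (s • A) i l * B l j| ≤ ∑ l, |exp (s • A) i l * B l j| :=
      Finset.abs_sum_le_sum_abs _ _
    _ ≤ ∑ l, exp (s • metzlerPart A) i l * entAbs B l j := by
      refine Finset.sum_le_sum fun l _ => ?_
      rw [abs_mul]
      exact mul_le_mul_of_nonneg_right (abs_exp_le_exp_metzler A hs i l) (abs_nonneg _)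

end NormedAux

section Bridges
variable {n nw : ℕ}

lemma vcont_exp (M : Matrix (Fin n) (Fin n) ℝ) :
    Continuous fun s : ℝ => NormedSpace.exp (s • M) := by
  letI : SeminormedRing (Matrix (Fin n) (Fin n) ℝ) := Matrix.linftyOpSemiNormedRing
  letI : NormedRing (Matrix (Fin n) (Fin n) ℝ) := Matrix.linftyOpNormedRing
  letI : NormedAlgebra ℝ (Matrix (Fin n) (Fin n) ℝ) := Matrix.linftyOpNormedAlgebra
  exact cont_exp_path M

lemma vabs_exp_le (A : Matrix (Fin n) (Fin n) ℝ) {t : ℝ} (ht : 0 ≤ t) (i j : Fin n) :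
    |NormedSpace.exp (t • A) i j| ≤ NormedSpace.exp (t • metzlerPart A) i j := by
  letI : SeminormedRing (Matrix (Fin n) (Fin n) ℝ) := Matrix.linftyOpSemiNormedRing
  letI : NormedRing (Matrix (Fin n) (Fin n) ℝ) := Matrix.linftyOpNormedRing
  letI : NormedAlgebra ℝ (Matrix (Fin n) (Fin n) ℝ) := Matrix.linftyOpNormedAlgebra
  exact abs_exp_le_exp_metzler A ht i j

lemma vmul_entry_bound (A : Matrix (Fin n) (Fin n) ℝ) (B : Matrix (Fin n) (Fin nw) ℝ)
    {s : ℝ} (hs : 0 ≤ s) (i : Fin n) (j : Fin nw) :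
    |(NormedSpace.exp (s • A) * B) i j|
      ≤ (NormedSpace.exp (s • metzlerPart A) * entAbs B) i j := by
  letI : SeminormedRing (Matrix (Fin n) (Fin n) ℝ) := Matrix.linftyOpSemiNormedRing
  letI : NormedRing (Matrix (Fin n) (Fin n) ℝ) := Matrix.linftyOpNormedRing
  letI : NormedAlgebra ℝ (Matrix (Fin n) (Fin n) ℝ) := Matrix.linftyOpNormedAlgebra
  exact mul_entry_bound A B hs i j

lemma vexp_split (M : Matrix (Fin n) (Fin n) ℝ) (s τ : ℝ) :
    NormedSpace.exp ((s - τ) • M)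
      = NormedSpace.exp (s • M) * NormedSpace.exp ((-τ) • M) := by
  letI : SeminormedRing (Matrix (Fin n) (Fin n) ℝ) := Matrix.linftyOpSemiNormedRing
  letI : NormedRing (Matrix (Fin n) (Fin n) ℝ) := Matrix.linftyOpNormedRing
  letI : NormedAlgebra ℝ (Matrix (Fin n) (Fin n) ℝ) := Matrix.linftyOpNormedAlgebra
  rw [sub_eq_add_neg s τ]
  exact exp_smul_add M s (-τ)

lemma vftc (M : Matrix (Fin n) (Fin n) ℝ) (v : Fin n → ℝ) (a b : ℝ) :
    (∫ s in a..b, (M * NormedSpace.exp (s • M)).mulVec v) =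
      (NormedSpace.exp (b • M)).mulVec v - (NormedSpace.exp (a • M)).mulVec v := by
  letI : SeminormedRing (Matrix (Fin n) (Fin n) ℝ) := Matrix.linftyOpSemiNormedRing
  letI : NormedRing (Matrix (Fin n) (Fin n) ℝ) := Matrix.linftyOpNormedRing
  letI : NormedAlgebra ℝ (Matrix (Fin n) (Fin n) ℝ) := Matrix.linftyOpNormedAlgebra
  exact ftc_exp' M v a b

lemma vexp_zero : NormedSpace.exp ((0:ℝ) • (1 : Matrix (Fin n) (Fin n) ℝ)) = 1 := by
  rw [zero_smul]; exact NormedSpace.exp_zero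

lemma vexp_zero' (M : Matrix (Fin n) (Fin n) ℝ) :
    NormedSpace.exp ((0:ℝ) • M) = 1 := by
  rw [zero_smul]; exact NormedSpace.exp_zero

end Bridges

end MetzlerAux

open MetzlerAux in
theorem metzler_overapproximation {n nw : ℕ}
    (A : Matrix (Fin n) (Fin n) ℝ) (B : Matrix (Fin n) (Fin nw) ℝ)
    (px0 : Fin n → ℝ) (hpx0 : ∀ i, 0 ≤ px0 i)
    (pw : ℝ → Fin nw → ℝ) (hpwmeas : ∀ i, Measurable fun τ => pw τ i)
    (hpwbdd : ∃ C, ∀ τ, ∀ i, |pw τ i| ≤ C) (hpw : ∀ τ, ∀ i, 0 ≤ pw τ i)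
    (px pcheck : ℝ → Fin n → ℝ)
    (hpx : ∀ t, px t = (entAbs (NormedSpace.exp (t • A))).mulVec px0
        + ∫ τ in (0:ℝ)..t, (entAbs (NormedSpace.exp ((t - τ) • A) * B)).mulVec (pw τ))
    (hpcheck : ∀ t, pcheck t = (NormedSpace.exp (t • metzlerPart A)).mulVec px0
        + ∫ τ in (0:ℝ)..t,
            (NormedSpace.exp ((t - τ) • metzlerPart A)).mulVec ((entAbs B).mulVec (pw τ))) :
    (∀ t : ℝ, 0 ≤ t → ∀ i, px t i ≤ pcheck t i) ∧
      pcheck 0 = px0 ∧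
      (∀ t : ℝ, 0 ≤ t →
        pcheck t = px0 + ∫ s in (0:ℝ)..t,
          ((metzlerPart A).mulVec (pcheck s) + (entAbs B).mulVec (pw s))) := by
  obtain ⟨Cw, hCw⟩ := hpwbdd
  set M : Matrix (Fin n) (Fin n) ℝ := metzlerPart A with hM
  set g : ℝ → Fin n → ℝ := fun τ => (entAbs B).mulVec (pw τ) with hg
  -- facts about g
  have hgmeas : ∀ j, Measurable fun τ => g τ j := by
    intro j
    simp only [hg, Matrix.mulVec, dotProduct]
    exact Finset.measurable_sum _ fun k _ => (measurable_const.mul (hpwmeas k))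
  have hgbdd : ∃ C, ∀ τ j, |g τ j| ≤ C := by
    refine ⟨(∑ j, ∑ k, |entAbs B j k|) * |Cw|, fun τ j => ?_⟩
    simp only [hg, Matrix.mulVec, dotProduct]
    calc |∑ k, entAbs B j k * pw τ k| ≤ ∑ k, |entAbs B j k * pw τ k| :=
        Finset.abs_sum_le_sum_abs _ _
      _ ≤ ∑ k, |entAbs B j k| * |Cw| := by
        refine Finset.sum_le_sum fun k _ => ?_
        rw [abs_mul]
        exact mul_le_mul_of_nonneg_left ((hCw τ k).trans (le_abs_self Cw)) (abs_nonneg _)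
      _ = (∑ k, |entAbs B j k|) * |Cw| := (Finset.sum_mul _ _ _).symm
      _ ≤ (∑ j', ∑ k, |entAbs B j' k|) * |Cw| := by
        refine mul_le_mul_of_nonneg_right ?_ (abs_nonneg _)
        exact Finset.single_le_sum (f := fun j' => ∑ k, |entAbs B j' k|)
          (fun _ _ => Finset.sum_nonneg fun _ _ => abs_nonneg _) (Finset.mem_univ j)
  have hpwb : ∃ C, ∀ τ j, |pw τ j| ≤ C := ⟨Cw, hCw⟩
  -- part 2
  have part2 : pcheck 0 = px0 := by
    rw [hpcheck 0]
    rw [MetzlerAux.vexp_zero' (metzlerPart A), Matrix.one_mulVec,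
      intervalIntegral.integral_same, add_zero]
  -- part 1
  have part1 : ∀ t : ℝ, 0 ≤ t → ∀ i, px t i ≤ pcheck t i := by
    intro t ht i
    have hkF : Continuous fun τ : ℝ => entAbs (NormedSpace.exp ((t - τ) • A) * B) := by
      refine continuous_matrix fun i' j' => ?_
      exact ((((vcont_exp A).comp
        (continuous_const.sub continuous_id)).matrix_mul
          continuous_const).matrix_elem i' j').abs
    have hkG : Continuous fun τ : ℝ => NormedSpace.exp ((t - τ) • M) :=
      (vcont_exp M).comp (continuous_const.sub continuous_id)
    have hFint : IntervalIntegrable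
        (fun τ => (entAbs (NormedSpace.exp ((t - τ) • A) * B)).mulVec (pw τ))
        volume 0 t := intervalIntegrable_mulVec hkF hpwmeas hpwb
    have hGint : IntervalIntegrable
        (fun τ => (NormedSpace.exp ((t - τ) • M)).mulVec (g τ)) volume 0 t :=
      intervalIntegrable_mulVec hkG hgmeas hgbdd
    rw [hpx t, hpcheck t]
    simp only [Pi.add_apply]
    refine add_le_add ?_ ?_
    · simp only [Matrix.mulVec, dotProduct, entAbs, Matrix.of_apply]
      exact Finset.sum_le_sum fun j _ =>
        mul_le_mul_of_nonneg_right (vabs_exp_le A ht i j) (hpx0 j)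
    · rw [integral_entry hFint i, integral_entry hGint i]
      refine intervalIntegral.integral_mono_on ht (intervalIntegrable_entry hFint i)
        (intervalIntegrable_entry hGint i) ?_
      intro τ hτ
      have hts : (0:ℝ) ≤ t - τ := by linarith [hτ.2]
      have hsplit : (NormedSpace.exp ((t - τ) • M)).mulVec (g τ)
          = ((NormedSpace.exp ((t - τ) • M)) * entAbs B).mulVec (pw τ) := by
        rw [hg]; exact Matrix.mulVec_mulVec (pw τ) (NormedSpace.exp ((t - τ) • M)) (entAbs B)
      rw [hsplit]
      simp only [Matrix.mulVec, dotProduct, entAbs, Matrix.of_apply]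
      refine Finset.sum_le_sum fun j _ => ?_
      exact mul_le_mul_of_nonneg_right (vmul_entry_bound A B hts i j) (hpw τ j)
  refine ⟨part1, part2, ?_⟩
  -- part 3
  intro t ht
  have hPcont : Continuous fun s : ℝ => NormedSpace.exp (s • M) := vcont_exp M
  have hwker : ∀ a b : ℝ, IntervalIntegrable
      (fun τ => (NormedSpace.exp ((-τ) • M)).mulVec (g τ)) volume a b := fun a b =>
    intervalIntegrable_mulVec ((vcont_exp M).comp continuous_neg) hgmeas hgbdd
  set w : ℝ → Fin n → ℝ :=
    fun s => ∫ τ in (0:ℝ)..s, (NormedSpace.exp ((-τ) • M)).mulVec (g τ) with hw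
  have hwcont : Continuous w := intervalIntegral.continuous_primitive hwker 0
  set u : ℝ → Fin n → ℝ :=
    fun s => ∫ τ in (0:ℝ)..s, (NormedSpace.exp ((s - τ) • M)).mulVec (g τ) with hu
  have hsplitexp : ∀ s τ : ℝ, (NormedSpace.exp ((s - τ) • M)).mulVec (g τ)
      = (NormedSpace.exp (s • M)).mulVec ((NormedSpace.exp ((-τ) • M)).mulVec (g τ)) := by
    intro s τ
    have hmx : NormedSpace.exp ((s - τ) • M)
        = NormedSpace.exp (s • M) * NormedSpace.exp ((-τ) • M) := vexp_split M s τ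
    calc (NormedSpace.exp ((s - τ) • M)).mulVec (g τ)
        = (NormedSpace.exp (s • M) * NormedSpace.exp ((-τ) • M)).mulVec (g τ) := by
          rw [hmx]
      _ = _ := (Matrix.mulVec_mulVec (g τ) _ _).symm
  have hu_eq : ∀ s, u s = (NormedSpace.exp (s • M)).mulVec (w s) := by
    intro s
    calc u s = ∫ τ in (0:ℝ)..s,
          mulVecCLM (NormedSpace.exp (s • M))
            ((NormedSpace.exp ((-τ) • M)).mulVec (g τ)) := by
          refine intervalIntegral.integral_congr fun τ _ => ?_
          simpa using hsplitexp s τ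
      _ = (NormedSpace.exp (s • M)).mulVec (w s) := by
          rw [(mulVecCLM _).intervalIntegral_comp_comm (hwker 0 s)]
          rfl
  have hucont : Continuous u := by
    rw [funext hu_eq]
    exact hPcont.matrix_mulVec hwcont
  have hpch_eq : ∀ s, pcheck s = (NormedSpace.exp (s • M)).mulVec px0 + u s := fun s =>
    hpcheck s
  have hI1 : IntervalIntegrable
      (fun s => M.mulVec ((NormedSpace.exp (s • M)).mulVec px0)) volume 0 t :=
    (continuous_const.matrix_mulVec (hPcont.matrix_mulVec continuous_const)).intervalIntegrable 0 t
  have hI2 : IntervalIntegrable (fun s => M.mulVec (u s)) volume 0 t :=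
    (continuous_const.matrix_mulVec hucont).intervalIntegrable 0 t
  have hI3 : IntervalIntegrable g volume 0 t :=
    intervalIntegrable_mulVec (G := fun _ => entAbs B) continuous_const hpwmeas hpwb
  have key1 : (∫ s in (0:ℝ)..t, M.mulVec ((NormedSpace.exp (s • M)).mulVec px0))
      = (NormedSpace.exp (t • M)).mulVec px0 - px0 := by
    have hcong : (∫ s in (0:ℝ)..t, M.mulVec ((NormedSpace.exp (s • M)).mulVec px0))
        = ∫ s in (0:ℝ)..t, (M * NormedSpace.exp (s • M)).mulVec px0 :=
      intervalIntegral.integral_congr fun s _ => Matrix.mulVec_mulVec px0 M _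
    rw [hcong, vftc M px0 0 t, vexp_zero' M, Matrix.one_mulVec]
  obtain ⟨Cg, hCg⟩ := hgbdd
  have hgbdd : ∃ C, ∀ τ j, |g τ j| ≤ C := ⟨Cg, hCg⟩
  have key2 : (∫ s in (0:ℝ)..t, M.mulVec (u s)) = u t - ∫ s in (0:ℝ)..t, g s := by
    have hHcont : Continuous fun r : ℝ => M * NormedSpace.exp (r • M) :=
      continuous_const.matrix_mul hPcont
    have hswap := swap_triangle ht (fun r => M * NormedSpace.exp (r • M)) hHcont g hgmeas hCg
    have hstep : ∀ s : ℝ, M.mulVec (u s)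
        = ∫ τ in (0:ℝ)..s, (M * NormedSpace.exp ((s - τ) • M)).mulVec (g τ) := by
      intro s
      have hint : IntervalIntegrable
          (fun τ => (NormedSpace.exp ((s - τ) • M)).mulVec (g τ)) volume 0 s :=
        intervalIntegrable_mulVec ((vcont_exp M).comp (continuous_const.sub continuous_id))
          hgmeas hgbdd
      calc M.mulVec (u s)
          = ∫ τ in (0:ℝ)..s,
              mulVecCLM M ((NormedSpace.exp ((s - τ) • M)).mulVec (g τ)) :=
            ((mulVecCLM M).intervalIntegral_comp_comm hint).symm
        _ = _ := intervalIntegral.integral_congr fun τ _ => by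
            simp only [mulVecCLM_apply]
            exact Matrix.mulVec_mulVec (g τ) M (NormedSpace.exp ((s - τ) • M))
    rw [intervalIntegral.integral_congr (fun s _ => hstep s), hswap]
    have hinner : ∀ τ ∈ Set.uIcc (0:ℝ) t,
        (∫ s in τ..t, (M * NormedSpace.exp ((s - τ) • M)).mulVec (g τ))
          = (NormedSpace.exp ((t - τ) • M)).mulVec (g τ) - g τ := by
      intro τ _
      have hsub := intervalIntegral.integral_comp_sub_right (a := τ) (b := t)
        (fun r => (M * NormedSpace.exp (r • M)).mulVec (g τ)) τ
      rw [hsub, sub_self, vftc M (g τ) 0 (t - τ), vexp_zero' M, Matrix.one_mulVec]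
    rw [intervalIntegral.integral_congr hinner]
    have hint1 : IntervalIntegrable
        (fun τ => (NormedSpace.exp ((t - τ) • M)).mulVec (g τ)) volume 0 t :=
      intervalIntegrable_mulVec ((vcont_exp M).comp (continuous_const.sub continuous_id))
        hgmeas hgbdd
    rw [intervalIntegral.integral_sub hint1 hI3]
  have hintegrand : ∀ s, M.mulVec (pcheck s) + g s
      = M.mulVec ((NormedSpace.exp (s • M)).mulVec px0) + (M.mulVec (u s) + g s) := by
    intro s
    rw [hpch_eq s, Matrix.mulVec_add, add_assoc]
  rw [hpch_eq t]
  rw [intervalIntegral.integral_congr (fun s _ => hintegrand s),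
    intervalIntegral.integral_add hI1 (hI2.add hI3), intervalIntegral.integral_add hI2 hI3,
    key1, key2]
  abel
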